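/- Solutions of the de Donder–Weyl equations satisfy the multisymplectic conservation law: if (v, r, τ) and (v', r', τ') are two first variations of a solution (u, p, σ), then ∂_t(vⁱ r'ᵢ − v'ⁱ rᵢ) = −∂_μ(vⁱ τ'ᵢ^μ − v'ⁱ τᵢ^μ), where the Hessian of the Hamiltonian H(t,x,u,p,σ) is symmetric. -/

import Mathlib

/-- Index type for the fields `(u, p, σ)` of the de Donder–Weyl equations:
`n` components of `u`, `n` components of `p`, and `n × m` components of `σ`. -/
def WIdx (n m : ℕ) : Type := Fin n ⊕ (Fin n ⊕ Fin n × Fin m)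

instance (n m : ℕ) : Fintype (WIdx n m) := by unfold WIdx; infer_instance

def uIdx {n m : ℕ} (i : Fin n) : WIdx n m := Sum.inl i
def pIdx {n m : ℕ} (i : Fin n) : WIdx n m := Sum.inr (Sum.inl i)
def sIdx {n m : ℕ} (i : Fin n) (μ : Fin m) : WIdx n m := Sum.inr (Sum.inr (i, μ))

/-- `V = (v, r, τ)` is a first variation of a solution of the de Donder–Weyl
equations, where `Hess a b` denotes the Hessian `∂²H/∂w_a∂w_b` of the
Hamiltonian evaluated along the background solution at `(t, x)`:
`v̇ⁱ = H_{pᵢ w_b} V_b`, `∂_μ vⁱ = H_{σᵢ^μ w_b} V_b`,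
`−(ṙᵢ + ∂_μ τᵢ^μ) = H_{uⁱ w_b} V_b` (sum over repeated indices). -/
def IsFirstVariation {n m : ℕ}
    (Hess : ℝ → (Fin m → ℝ) → WIdx n m → WIdx n m → ℝ)
    (V : ℝ → (Fin m → ℝ) → WIdx n m → ℝ) : Prop :=
  (∀ (x : Fin m → ℝ) (a : WIdx n m), Differentiable ℝ (fun s => V s x a)) ∧
  (∀ (t : ℝ) (a : WIdx n m), Differentiable ℝ (fun x => V t x a)) ∧
  (∀ t x (i : Fin n),
    deriv (fun s => V s x (uIdx i)) t
      = ∑ b : WIdx n m, Hess t x (pIdx i) b * V t x b) ∧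
  (∀ t x (i : Fin n) (μ : Fin m),
    fderiv ℝ (fun x => V t x (uIdx i)) x (Pi.single μ 1)
      = ∑ b : WIdx n m, Hess t x (sIdx i μ) b * V t x b) ∧
  (∀ t x (i : Fin n),
    -(deriv (fun s => V s x (pIdx i)) t
        + ∑ μ : Fin m, fderiv ℝ (fun x => V t x (sIdx i μ)) x (Pi.single μ 1))
      = ∑ b : WIdx n m, Hess t x (uIdx i) b * V t x b)

/-- the multisymplectic conservation law. For any two first
variations `(v, r, τ)` and `(v', r', τ')` of a solution of the de Donder–Weyl
equations (with symmetric Hessian of `H`),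
`∂_t (vⁱ r'ᵢ − v'ⁱ rᵢ) = −∂_μ (vⁱ τ'ᵢ^μ − v'ⁱ τᵢ^μ)`. -/
lemma msl_aux {n m : ℕ} (H : WIdx n m → WIdx n m → ℝ)
    (hH : ∀ a b, H a b = H b a)
    (W W' : WIdx n m → ℝ) (T T' : Fin n → Fin m → ℝ) :
    ∑ i : Fin n, ((∑ b : WIdx n m, H (pIdx i) b * W b) * W' (pIdx i)
        + W (uIdx i) * (-(∑ b : WIdx n m, H (uIdx i) b * W' b) - ∑ μ : Fin m, T' i μ)
        - ((∑ b : WIdx n m, H (pIdx i) b * W' b) * W (pIdx i)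
        + W' (uIdx i) * (-(∑ b : WIdx n m, H (uIdx i) b * W b) - ∑ μ : Fin m, T i μ)))
      = - ∑ μ : Fin m, ∑ i : Fin n,
          ((∑ b : WIdx n m, H (sIdx i μ) b * W b) * W' (sIdx i μ) + W (uIdx i) * T' i μ
          - ((∑ b : WIdx n m, H (sIdx i μ) b * W' b) * W (sIdx i μ) + W' (uIdx i) * T i μ)) := by
  set F : WIdx n m → ℝ := fun a => ∑ b : WIdx n m, H a b * (W b * W' a - W' b * W a) with hF
  have e1 : ∀ a : WIdx n m,
      (∑ b : WIdx n m, H a b * W b) * W' a - (∑ b : WIdx n m, H a b * W' b) * W a = F a := by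
    intro a
    rw [hF, Finset.sum_mul, Finset.sum_mul, ← Finset.sum_sub_distrib]
    exact Finset.sum_congr rfl fun b _ => by ring
  have key : ∑ a : WIdx n m, F a = 0 := by
    have h2 : (∑ a : WIdx n m, F a) = - ∑ a : WIdx n m, F a :=
      calc ∑ a : WIdx n m, F a
          = ∑ b : WIdx n m, ∑ a : WIdx n m, H a b * (W b * W' a - W' b * W a) := by
            simp only [hF]; exact Finset.sum_comm
        _ = ∑ b : WIdx n m, ∑ a : WIdx n m, -(H b a * (W a * W' b - W' a * W b)) :=
            Finset.sum_congr rfl fun b _ => Finset.sum_congr rfl fun a _ => by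
              rw [hH a b]; ring
        _ = - ∑ a : WIdx n m, F a := by simp only [hF, Finset.sum_neg_distrib]
    linarith
  have hspl : ∑ a : WIdx n m, F a
      = ∑ i : Fin n, F (uIdx i) + ∑ i : Fin n, F (pIdx i)
        + ∑ i : Fin n, ∑ μ : Fin m, F (sIdx i μ) := by
    rw [show (∑ a : WIdx n m, F a) = ∑ a : Fin n ⊕ (Fin n ⊕ Fin n × Fin m), F a from rfl]
    rw [Fintype.sum_sum_type, Fintype.sum_sum_type, Fintype.sum_prod_type]
    simp only [uIdx, pIdx, sIdx]
    ring
  have hA : ∑ i : Fin n, ((∑ b : WIdx n m, H (pIdx i) b * W b) * W' (pIdx i)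
        + W (uIdx i) * (-(∑ b : WIdx n m, H (uIdx i) b * W' b) - ∑ μ : Fin m, T' i μ)
        - ((∑ b : WIdx n m, H (pIdx i) b * W' b) * W (pIdx i)
        + W' (uIdx i) * (-(∑ b : WIdx n m, H (uIdx i) b * W b) - ∑ μ : Fin m, T i μ)))
      = ∑ i : Fin n, (F (pIdx i) + F (uIdx i)
          - (W (uIdx i) * ∑ μ : Fin m, T' i μ - W' (uIdx i) * ∑ μ : Fin m, T i μ)) := by
    refine Finset.sum_congr rfl fun i _ => ?_
    rw [← e1 (pIdx i), ← e1 (uIdx i)]; ring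
  have hB : ∑ μ : Fin m, ∑ i : Fin n,
          ((∑ b : WIdx n m, H (sIdx i μ) b * W b) * W' (sIdx i μ) + W (uIdx i) * T' i μ
          - ((∑ b : WIdx n m, H (sIdx i μ) b * W' b) * W (sIdx i μ) + W' (uIdx i) * T i μ))
      = ∑ μ : Fin m, ∑ i : Fin n,
          (F (sIdx i μ) + (W (uIdx i) * T' i μ - W' (uIdx i) * T i μ)) := by
    refine Finset.sum_congr rfl fun μ _ => Finset.sum_congr rfl fun i _ => ?_
    rw [← e1 (sIdx i μ)]; ring
  rw [hA, hB]
  have hswap : ∑ μ : Fin m, ∑ i : Fin n,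
      (F (sIdx i μ) + (W (uIdx i) * T' i μ - W' (uIdx i) * T i μ))
      = ∑ i : Fin n, ∑ μ : Fin m,
      (F (sIdx i μ) + (W (uIdx i) * T' i μ - W' (uIdx i) * T i μ)) := Finset.sum_comm
  rw [hswap]
  simp only [Finset.sum_add_distrib, Finset.sum_sub_distrib, Finset.mul_sum] at *
  linarith [key, hspl]

theorem multisymplectic_conservation_law {n m : ℕ}
    (Hess : ℝ → (Fin m → ℝ) → WIdx n m → WIdx n m → ℝ)
    (hsymm : ∀ t x a b, Hess t x a b = Hess t x b a)
    (V V' : ℝ → (Fin m → ℝ) → WIdx n m → ℝ)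
    (hV : IsFirstVariation Hess V) (hV' : IsFirstVariation Hess V') :
    ∀ (t : ℝ) (x : Fin m → ℝ),
      deriv (fun s => ∑ i : Fin n,
          (V s x (uIdx i) * V' s x (pIdx i) - V' s x (uIdx i) * V s x (pIdx i))) t
        = - ∑ μ : Fin m,
            fderiv ℝ (fun x => ∑ i : Fin n,
                (V t x (uIdx i) * V' t x (sIdx i μ)
                  - V' t x (uIdx i) * V t x (sIdx i μ)))
              x (Pi.single μ 1) := by
  obtain ⟨hVt, hVx, hVu, hVs, hVp⟩ := hV
  obtain ⟨hV't, hV'x, hV'u, hV's, hV'p⟩ := hV'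
  intro t x
  -- expand the time derivative
  have hL : deriv (fun s => ∑ i : Fin n,
        (V s x (uIdx i) * V' s x (pIdx i) - V' s x (uIdx i) * V s x (pIdx i))) t
      = ∑ i : Fin n, (deriv (fun s => V s x (uIdx i)) t * V' t x (pIdx i)
          + V t x (uIdx i) * deriv (fun s => V' s x (pIdx i)) t
          - (deriv (fun s => V' s x (uIdx i)) t * V t x (pIdx i)
          + V' t x (uIdx i) * deriv (fun s => V s x (pIdx i)) t)) := by
    refine HasDerivAt.deriv (HasDerivAt.fun_sum fun i _ => HasDerivAt.sub ?_ ?_)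
    · exact ((hVt x (uIdx i)).differentiableAt.hasDerivAt.mul
        (hV't x (pIdx i)).differentiableAt.hasDerivAt)
    · exact ((hV't x (uIdx i)).differentiableAt.hasDerivAt.mul
        (hVt x (pIdx i)).differentiableAt.hasDerivAt)
  -- expand each spatial derivative
  have hR : ∀ μ : Fin m, fderiv ℝ (fun y => ∑ i : Fin n,
        (V t y (uIdx i) * V' t y (sIdx i μ) - V' t y (uIdx i) * V t y (sIdx i μ)))
        x (Pi.single μ 1)
      = ∑ i : Fin n,
          (fderiv ℝ (fun y => V t y (uIdx i)) x (Pi.single μ 1) * V' t x (sIdx i μ)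
          + V t x (uIdx i) * fderiv ℝ (fun y => V' t y (sIdx i μ)) x (Pi.single μ 1)
          - (fderiv ℝ (fun y => V' t y (uIdx i)) x (Pi.single μ 1) * V t x (sIdx i μ)
          + V' t x (uIdx i) * fderiv ℝ (fun y => V t y (sIdx i μ)) x (Pi.single μ 1))) := by
    intro μ
    have h : HasFDerivAt (fun y => ∑ i : Fin n,
          (V t y (uIdx i) * V' t y (sIdx i μ) - V' t y (uIdx i) * V t y (sIdx i μ)))
        (∑ i : Fin n,
          ((V t x (uIdx i) • fderiv ℝ (fun y => V' t y (sIdx i μ)) x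
            + V' t x (sIdx i μ) • fderiv ℝ (fun y => V t y (uIdx i)) x)
          - (V' t x (uIdx i) • fderiv ℝ (fun y => V t y (sIdx i μ)) x
            + V t x (sIdx i μ) • fderiv ℝ (fun y => V' t y (uIdx i)) x))) x := by
      refine HasFDerivAt.fun_sum fun i _ => HasFDerivAt.sub ?_ ?_
      · exact ((hVx t (uIdx i)).differentiableAt.hasFDerivAt.mul
          (hV'x t (sIdx i μ)).differentiableAt.hasFDerivAt)
      · exact ((hV'x t (uIdx i)).differentiableAt.hasFDerivAt.mul
          (hVx t (sIdx i μ)).differentiableAt.hasFDerivAt)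
    rw [h.fderiv]
    simp only [ContinuousLinearMap.coe_sum', Finset.sum_apply,
      ContinuousLinearMap.sub_apply, ContinuousLinearMap.add_apply,
      ContinuousLinearMap.coe_smul', Pi.smul_apply, smul_eq_mul]
    exact Finset.sum_congr rfl fun i _ => by ring
  rw [hL]
  rw [show (∑ μ : Fin m, fderiv ℝ (fun y => ∑ i : Fin n,
        (V t y (uIdx i) * V' t y (sIdx i μ) - V' t y (uIdx i) * V t y (sIdx i μ)))
        x (Pi.single μ 1))
      = ∑ μ : Fin m, ∑ i : Fin n,
          (fderiv ℝ (fun y => V t y (uIdx i)) x (Pi.single μ 1) * V' t x (sIdx i μ)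
          + V t x (uIdx i) * fderiv ℝ (fun y => V' t y (sIdx i μ)) x (Pi.single μ 1)
          - (fderiv ℝ (fun y => V' t y (uIdx i)) x (Pi.single μ 1) * V t x (sIdx i μ)
          + V' t x (uIdx i) * fderiv ℝ (fun y => V t y (sIdx i μ)) x (Pi.single μ 1)))
    from Finset.sum_congr rfl fun μ _ => hR μ]
  -- substitute the first-variation equations
  have hDr : ∀ i : Fin n, deriv (fun s => V s x (pIdx i)) t
      = -(∑ b : WIdx n m, Hess t x (uIdx i) b * V t x b)
        - ∑ μ : Fin m, fderiv ℝ (fun y => V t y (sIdx i μ)) x (Pi.single μ 1) :=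
    fun i => by have := hVp t x i; linarith
  have hDr' : ∀ i : Fin n, deriv (fun s => V' s x (pIdx i)) t
      = -(∑ b : WIdx n m, Hess t x (uIdx i) b * V' t x b)
        - ∑ μ : Fin m, fderiv ℝ (fun y => V' t y (sIdx i μ)) x (Pi.single μ 1) :=
    fun i => by have := hV'p t x i; linarith
  simp only [hVu, hV'u, hVs, hV's, hDr, hDr']
  exact msl_aux (Hess t x) (hsymm t x) (V t x) (V' t x)
    (fun i μ => fderiv ℝ (fun y => V t y (sIdx i μ)) x (Pi.single μ 1))
    (fun i μ => fderiv ℝ (fun y => V' t y (sIdx i μ)) x (Pi.single μ 1))
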